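/- Let d ≥ 1 be an integer. For every t ∈ ℝ and all n, n' ∈ ℤᵈ, the operator exponential exp(itΔ) on ℓ²(ℤᵈ) satisfies (exp(itΔ)δ_{n'})(n) = ∏_{j=1}^d i^{−m_j} · J_{m_j}(t), where m = n − n' ∈ ℤᵈ and i^{−m_j} denotes the integer power of the imaginary unit. -/

import Mathlib

open MeasureTheory Complex Real Set Nat

noncomputable def besselJ (m : ℤ) (t : ℝ) : ℂ :=
  (1 / (2 * Real.pi)) * ∫ k in (0:ℝ)..(2 * Real.pi),
    Complex.exp (-Complex.I * m * k - Complex.I * t * Real.sin k)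

lemma orth (m : ℤ) :
    (∫ x in Ioc (0:ℝ) (2*π), Complex.exp (-Complex.I * m * x))
      = if m = 0 then ((2*π:ℝ):ℂ) else 0 := by
  have h2 : (0:ℝ) ≤ 2*π := by positivity
  rw [← intervalIntegral.integral_of_le h2]
  by_cases hm : m = 0
  · simp [hm]
  · have hc : (-Complex.I * m) ≠ 0 := by
      simp [Complex.ext_iff, hm]
    rw [if_neg hm, integral_exp_mul_complex hc]
    have h1 : (-Complex.I * m * ((2*π:ℝ):ℂ)) = ((-m : ℤ) : ℂ) * (2*π*Complex.I) := by
      push_cast; ring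
    rw [h1, Complex.exp_int_mul_two_pi_mul_I]
    simp

lemma oneD (m : ℤ) (t : ℝ) :
    (∫ x in Ioc (0:ℝ) (2*π),
        Complex.exp (Complex.I * t * Real.cos x) * Complex.exp (-Complex.I * m * x))
      = ((2*π:ℝ):ℂ) * (Complex.I ^ (-m) * besselJ m t) := by
  have h2 : (0:ℝ) ≤ 2*π := by positivity
  set g : ℝ → ℂ := fun u => Complex.exp (-Complex.I * m * u - Complex.I * t * Real.sin u) with hg
  have hper : Function.Periodic g (2*π) := by
    intro u
    simp only [hg]
    rw [show (-Complex.I * m * ((u + 2*π : ℝ):ℂ) - Complex.I * t * Real.sin (u + 2*π))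
        = (-Complex.I * m * u - Complex.I * t * Real.sin u) + ((-m : ℤ):ℂ) * (2*π*Complex.I) by
      rw [Real.sin_add_two_pi]; push_cast; ring]
    rw [Complex.exp_add, Complex.exp_int_mul_two_pi_mul_I, mul_one]
  have hI : (Complex.I : ℂ) ^ (m : ℤ) = Complex.exp (Complex.I * m * (π/2)) := by
    rw [show (Complex.I * m * (π/2) : ℂ) = m * ((π/2:ℝ) * Complex.I) by push_cast; ring,
      Complex.exp_int_mul, Complex.exp_mul_I]
    norm_cast
    rw [Real.cos_pi_div_two, Real.sin_pi_div_two]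
    simp
  have key : ∀ x : ℝ, Complex.exp (Complex.I * t * Real.cos x) * Complex.exp (-Complex.I * m * x)
      = Complex.I ^ (-m : ℤ) * g (x - π/2) := by
    intro x
    have hsin : Real.sin (x - π/2) = -Real.cos x := by
      rw [Real.sin_sub]; simp [Real.sin_pi_div_two, Real.cos_pi_div_two]
    simp only [hg, hsin]
    rw [show (-Complex.I * m * ((x - π/2 : ℝ):ℂ) - Complex.I * t * ((-Real.cos x : ℝ):ℂ))
        = (Complex.I * m * (π/2)) + (Complex.I * t * Real.cos x + -Complex.I * m * x) by
      push_cast; ring]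
    rw [Complex.exp_add, ← hI, ← mul_assoc, ← zpow_add₀ Complex.I_ne_zero, neg_add_cancel,
      zpow_zero, one_mul, Complex.exp_add]
  rw [← intervalIntegral.integral_of_le h2]
  calc ∫ x in (0:ℝ)..(2*π), Complex.exp (Complex.I * t * Real.cos x) * Complex.exp (-Complex.I * m * x)
      = ∫ x in (0:ℝ)..(2*π), Complex.I ^ (-m : ℤ) * g (x - π/2) := by
        simp only [key]
    _ = Complex.I ^ (-m : ℤ) * ∫ x in (0:ℝ)..(2*π), g (x - π/2) := by
        rw [intervalIntegral.integral_const_mul]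
    _ = Complex.I ^ (-m : ℤ) * ∫ x in (0 - π/2 : ℝ)..(2*π - π/2), g x := by
        rw [intervalIntegral.integral_comp_sub_right]
    _ = Complex.I ^ (-m : ℤ) * ∫ x in (0:ℝ)..(2*π), g x := by
        have := hper.intervalIntegral_add_eq (0 - π/2) 0
        rw [zero_add] at this
        rw [show (2*π - π/2 : ℝ) = 0 - π/2 + 2*π by ring, this]
    _ = ((2*π:ℝ):ℂ) * (Complex.I ^ (-m) * besselJ m t) := by
        rw [besselJ, show (∫ k in (0:ℝ)..(2*Real.pi),
            Complex.exp (-Complex.I * m * k - Complex.I * t * Real.sin k))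
          = ∫ x in (0:ℝ)..(2*π), g x from rfl]
        have hπ : (π:ℂ) ≠ 0 := by
          exact_mod_cast Complex.ofReal_ne_zero.mpr Real.pi_ne_zero
        have hIm : (Complex.I:ℂ) ^ (m:ℤ) ≠ 0 := zpow_ne_zero _ Complex.I_ne_zero
        push_cast
        field_simp


variable {d : ℕ}

noncomputable def sphase (m : Fin d → ℤ) (x : Fin d → ℝ) : ℂ :=
  ∏ j, Complex.exp (-Complex.I * m j * x j)

noncomputable def sg (k : ℕ) (m : Fin d → ℤ) (x : Fin d → ℝ) : ℂ :=
  ((∑ j, Real.cos (x j) : ℝ) : ℂ) ^ k * sphase m x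

def sbox (d : ℕ) : Set (Fin d → ℝ) := Set.univ.pi fun _ => Ioc 0 (2*π)

lemma sbox_meas : MeasurableSet (sbox d) :=
  MeasurableSet.univ_pi fun _ => measurableSet_Ioc

lemma sbox_vol : (volume : Measure (Fin d → ℝ)) (sbox d) = (ENNReal.ofReal (2*π))^d := by
  rw [sbox, volume_pi, Measure.pi_pi]
  simp [Real.volume_Ioc]

lemma sbox_vol_lt_top : (volume : Measure (Fin d → ℝ)) (sbox d) < ⊤ := by
  rw [sbox_vol]; exact ENNReal.pow_lt_top ENNReal.ofReal_lt_top

lemma norm_sphase (m : Fin d → ℤ) (x : Fin d → ℝ) : ‖sphase m x‖ = 1 := by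
  rw [sphase, norm_prod]
  refine Finset.prod_eq_one fun j _ => ?_
  rw [Complex.norm_exp]
  norm_num [Complex.mul_re]

lemma cont_sg (k : ℕ) (m : Fin d → ℤ) : Continuous (sg k m : (Fin d → ℝ) → ℂ) := by
  unfold sg sphase
  fun_prop

lemma norm_sg_le (k : ℕ) (m : Fin d → ℤ) (x : Fin d → ℝ) : ‖sg k m x‖ ≤ (d:ℝ)^k := by
  rw [sg, norm_mul, norm_sphase, mul_one, norm_pow]
  gcongr
  rw [Complex.norm_real]
  calc ‖∑ j, Real.cos (x j)‖ ≤ ∑ j : Fin d, ‖Real.cos (x j)‖ := norm_sum_le _ _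
    _ ≤ ∑ _j : Fin d, 1 := by gcongr with j; exact Real.abs_cos_le_one _
    _ = (d:ℝ) := by simp

lemma integrable_sg (k : ℕ) (m : Fin d → ℤ) :
    Integrable (sg k m) ((volume : Measure (Fin d → ℝ)).restrict (sbox d)) := by
  haveI : Fact ((volume : Measure (Fin d → ℝ)) (sbox d) < ⊤) := ⟨sbox_vol_lt_top⟩
  exact (integrable_const ((d:ℝ)^k)).mono'
    ((cont_sg k m).aestronglyMeasurable)
    (Filter.Eventually.of_forall fun x => norm_sg_le k m x)

lemma sphase_add_single (m : Fin d → ℤ) (j : Fin d) (r : ℤ) (x : Fin d → ℝ) :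
    sphase (m + Pi.single j r) x = Complex.exp (-Complex.I * r * x j) * sphase m x := by
  unfold sphase
  have h1 : ∀ i : Fin d, Complex.exp (-Complex.I * (((m + Pi.single j r : Fin d → ℤ)) i) * x i)
      = Complex.exp (-Complex.I * ((Pi.single j r : Fin d → ℤ) i : ℤ) * x i)
        * Complex.exp (-Complex.I * m i * x i) := by
    intro i
    rw [← Complex.exp_add]
    congr 1
    have h2 : ((m + Pi.single j r : Fin d → ℤ)) i = m i + (Pi.single j r : Fin d → ℤ) i := rfl
    rw [h2]
    push_cast
    ring
  simp_rw [h1]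
  rw [Finset.prod_mul_distrib]
  congr 1
  rw [Finset.prod_eq_single j]
  · simp
  · intro i _ hij
    rw [Pi.single_eq_of_ne hij]
    simp
  · simp

lemma sphase_rec (m : Fin d → ℤ) (x : Fin d → ℝ) :
    (1/2 : ℂ) * ∑ j, (sphase (m + Pi.single j 1) x + sphase (m - Pi.single j 1) x)
      = ((∑ j, Real.cos (x j) : ℝ) : ℂ) * sphase m x := by
  have hsub : ∀ j : Fin d, m - Pi.single j 1 = m + Pi.single j (-1 : ℤ) := by
    intro j
    ext i
    by_cases h : i = j
    · subst h; simp [sub_eq_add_neg]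
    · simp [Pi.single_eq_of_ne h]
  have key : ∀ j : Fin d,
      sphase (m + Pi.single j 1) x + sphase (m - Pi.single j 1) x
        = ((2 * Real.cos (x j) : ℝ) : ℂ) * sphase m x := by
    intro j
    rw [hsub j, sphase_add_single, sphase_add_single, ← add_mul]
    congr 1
    push_cast
    rw [Complex.cos]
    rw [show (-Complex.I * 1 * ((x j : ℝ) : ℂ)) = -(((x j : ℝ) : ℂ) * Complex.I) by ring,
        show (-Complex.I * (-1) * ((x j : ℝ) : ℂ)) = ((x j : ℝ) : ℂ) * Complex.I by ring]
    ring
  simp_rw [key]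
  rw [← Finset.sum_mul]
  push_cast
  rw [← Finset.mul_sum]
  ring

lemma box_prod (g : Fin d → ℝ → ℂ) :
    (∫ x in sbox d, ∏ j, g j (x j)) = ∏ j, ∫ y in Ioc (0:ℝ) (2*π), g j y := by
  rw [← integral_indicator sbox_meas]
  have h : (sbox d).indicator (fun x => ∏ j, g j (x j))
      = fun x => ∏ j, (Ioc (0:ℝ) (2*π)).indicator (g j) (x j) := by
    funext x
    by_cases hx : x ∈ sbox d
    · rw [indicator_of_mem hx]
      refine Finset.prod_congr rfl fun j _ => ?_
      rw [indicator_of_mem (hx j (mem_univ j))]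
    · rw [indicator_of_notMem hx]
      symm
      obtain ⟨j, hj⟩ : ∃ j, x j ∉ Ioc (0:ℝ) (2*π) := by
        simpa [sbox, Set.mem_univ_pi] using hx
      exact Finset.prod_eq_zero (Finset.mem_univ j) (by rw [indicator_of_notMem hj])
  rw [h, MeasureTheory.integral_fintype_prod_volume_eq_prod (ι := Fin d)
    (f := fun j => (Ioc (0:ℝ) (2*π)).indicator (g j))]
  exact Finset.prod_congr rfl fun j _ => integral_indicator measurableSet_Ioc

noncomputable def ker (d : ℕ) (k : ℕ) (m : Fin d → ℤ) : ℂ :=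
  (((2*π)⁻¹ : ℝ) : ℂ)^d * ∫ x in sbox d, sg k m x

lemma sg_succ (k : ℕ) (m : Fin d → ℤ) (x : Fin d → ℝ) :
    sg (k+1) m x
      = (1/2 : ℂ) * ∑ j, (sg k (m + Pi.single j 1) x + sg k (m - Pi.single j 1) x) := by
  have : sg (k+1) m x = ((∑ j, Real.cos (x j) : ℝ) : ℂ) ^ k *
      ((1/2 : ℂ) * ∑ j, (sphase (m + Pi.single j 1) x + sphase (m - Pi.single j 1) x)) := by
    rw [sphase_rec, sg, pow_succ]
    ring
  rw [this, mul_left_comm, Finset.mul_sum]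
  refine congrArg _ (Finset.sum_congr rfl fun j _ => ?_)
  simp only [sg]
  ring

lemma ker_succ (k : ℕ) (m : Fin d → ℤ) :
    ker d (k+1) m
      = (1/2 : ℂ) * ∑ j, (ker d k (m + Pi.single j 1) + ker d k (m - Pi.single j 1)) := by
  unfold ker
  set F : Fin d → (Fin d → ℝ) → ℂ := fun j x => (1/2:ℂ) * sg k (m + Pi.single j 1) x
      + (1/2:ℂ) * sg k (m - Pi.single j 1) x with hF
  have hint : ∀ j, Integrable (F j) (volume.restrict (sbox d)) :=
    fun j => ((integrable_sg k _).const_mul _).add ((integrable_sg k _).const_mul _)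
  have hfun : (fun x : Fin d → ℝ => sg (k+1) m x) = fun x => ∑ j, F j x := by
    funext x
    rw [sg_succ, Finset.mul_sum]
    exact Finset.sum_congr rfl fun j _ => by rw [hF]; ring
  rw [show (∫ x in sbox d, sg (k+1) m x) = ∫ x in sbox d, ∑ j, F j x from congrArg _ hfun,
    integral_finset_sum Finset.univ (fun j _ => hint j)]
  have hFj : ∀ j : Fin d, (∫ x in sbox d, F j x)
      = (1/2:ℂ) * (∫ x in sbox d, sg k (m + Pi.single j 1) x)
        + (1/2:ℂ) * ∫ x in sbox d, sg k (m - Pi.single j 1) x := by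
    intro j
    rw [hF]
    rw [integral_add ((integrable_sg k _).const_mul _) ((integrable_sg k _).const_mul _),
      integral_const_mul, integral_const_mul]
  simp_rw [hFj]
  rw [Finset.mul_sum, Finset.mul_sum]
  exact Finset.sum_congr rfl fun j _ => by ring

lemma ker_zero (m : Fin d → ℤ) : ker d 0 m = if m = 0 then 1 else 0 := by
  have hsg : (sg 0 m : (Fin d → ℝ) → ℂ) = fun x => ∏ j, Complex.exp (-Complex.I * m j * x j) := by
    funext x; rw [sg, pow_zero, one_mul, sphase]
  rw [ker, hsg, box_prod (fun j y => Complex.exp (-Complex.I * m j * y))]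
  simp_rw [orth]
  by_cases hm : m = 0
  · subst hm
    simp only [Pi.zero_apply, if_pos rfl, if_pos]
    rw [Finset.prod_const, Finset.card_univ, Fintype.card_fin, ← mul_pow]
    rw [show ((((2*π)⁻¹ : ℝ) : ℂ) * ((2*π:ℝ):ℂ)) = 1 by
      rw [← Complex.ofReal_mul, inv_mul_cancel₀ (by positivity), Complex.ofReal_one]]
    simp
  · rw [if_neg hm]
    obtain ⟨j, hj⟩ : ∃ j, m j ≠ 0 := by
      by_contra h
      push_neg at h
      exact hm (funext fun j => h j)
    have hz : (∏ x : Fin d, if m x = 0 then ((2*π:ℝ):ℂ) else 0) = 0 :=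
      Finset.prod_eq_zero (Finset.mem_univ j) (if_neg hj)
    rw [hz, mul_zero]

lemma ker_tsum (t : ℝ) (m : Fin d → ℤ) :
    ∑' k : ℕ, ((Complex.I * t)^k * ((k ! : ℕ) : ℂ)⁻¹) * ker d k m
      = ∏ j, Complex.I ^ (-(m j)) * besselJ (m j) t := by
  classical
  haveI : Fact ((volume : Measure (Fin d → ℝ)) (sbox d) < ⊤) := ⟨sbox_vol_lt_top⟩
  set μ := (volume : Measure (Fin d → ℝ)).restrict (sbox d) with hμ
  set c0 : ℂ := (((2*π)⁻¹ : ℝ) : ℂ)^d with hc0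
  set F : ℕ → (Fin d → ℝ) → ℂ :=
    fun k x => ((Complex.I * t)^k * ((k ! : ℕ) : ℂ)⁻¹) * sg k m x with hFdef
  have hFint : ∀ k, Integrable (F k) μ := fun k => (integrable_sg k m).const_mul _
  have hcoeff : ∀ k : ℕ, ‖(Complex.I * t)^k * ((k ! : ℕ) : ℂ)⁻¹‖ = |t|^k / (k ! : ℝ) := by
    intro k
    rw [norm_mul, norm_pow, norm_mul, norm_inv, Complex.norm_I, one_mul, Complex.norm_real,
      Real.norm_eq_abs, Complex.norm_natCast, div_eq_mul_inv]
  have hFnorm : ∀ k x, ‖F k x‖ ≤ (|t| * d)^k / (k ! : ℝ) := by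
    intro k x
    calc ‖F k x‖ = |t|^k / (k ! : ℝ) * ‖sg k m x‖ := by
          rw [hFdef]; simp only; rw [norm_mul, hcoeff]
      _ ≤ |t|^k / (k ! : ℝ) * (d:ℝ)^k := by
          gcongr
          exact norm_sg_le k m x
      _ = (|t| * d)^k / (k ! : ℝ) := by rw [mul_pow]; ring
  have hsummable : Summable fun k => ∫ x, ‖F k x‖ ∂μ := by
    refine Summable.of_nonneg_of_le (fun k => integral_nonneg fun x => norm_nonneg _)
      (fun k => ?_)
      (((Real.summable_pow_div_factorial (|t| * d)).mul_right (μ Set.univ).toReal))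
    calc ∫ x, ‖F k x‖ ∂μ ≤ ∫ _x, (|t| * d)^k / (k ! : ℝ) ∂μ := by
          refine integral_mono_of_nonneg (Filter.Eventually.of_forall fun x => norm_nonneg _)
            (integrable_const _) (Filter.Eventually.of_forall fun x => hFnorm k x)
      _ = (|t| * ↑d) ^ k / ↑k ! * (μ Set.univ).toReal := by
          rw [integral_const, smul_eq_mul, mul_comm]; rfl
  have hswap : ∑' k, ∫ x, F k x ∂μ = ∫ x, (∑' k, F k x) ∂μ :=
    integral_tsum_of_summable_integral_norm hFint hsummable
  have hexp : ∀ z : ℂ, ∑' (k : ℕ), ((k ! : ℕ) : ℂ)⁻¹ * z ^ k = Complex.exp z := by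
    intro z
    rw [Complex.exp_eq_exp_ℂ, NormedSpace.exp_eq_tsum ℂ]
    simp [smul_eq_mul]
  have hpt : ∀ x : Fin d → ℝ, (∑' k, F k x)
      = ∏ j, (Complex.exp (Complex.I * t * Real.cos (x j))
          * Complex.exp (-Complex.I * m j * x j)) := by
    intro x
    have h1 : ∀ k : ℕ, F k x
        = ((k ! : ℕ) : ℂ)⁻¹ * (Complex.I * t * ((∑ j, Real.cos (x j) : ℝ) : ℂ))^k
            * sphase m x := by
      intro k
      rw [hFdef]
      simp only [sg]
      rw [mul_pow (Complex.I * (t:ℂ))]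
      ring
    calc (∑' k, F k x)
        = ∑' k : ℕ, ((k ! : ℕ) : ℂ)⁻¹
            * (Complex.I * t * ((∑ j, Real.cos (x j) : ℝ) : ℂ))^k * sphase m x :=
          tsum_congr h1
      _ = (∑' k : ℕ, ((k ! : ℕ) : ℂ)⁻¹
            * (Complex.I * t * ((∑ j, Real.cos (x j) : ℝ) : ℂ))^k) * sphase m x :=
          tsum_mul_right
      _ = Complex.exp (Complex.I * t * ((∑ j, Real.cos (x j) : ℝ) : ℂ)) * sphase m x := by
          rw [hexp]
      _ = ∏ j, (Complex.exp (Complex.I * t * Real.cos (x j))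
            * Complex.exp (-Complex.I * m j * x j)) := by
          rw [Finset.prod_mul_distrib, sphase]
          congr 1
          rw [show (Complex.I * t * ((∑ j, Real.cos (x j) : ℝ) : ℂ))
              = ∑ j, Complex.I * t * ((Real.cos (x j) : ℝ) : ℂ) by
            push_cast; rw [Finset.mul_sum], Complex.exp_sum]
  calc ∑' k : ℕ, ((Complex.I * t)^k * ((k ! : ℕ) : ℂ)⁻¹) * ker d k m
      = ∑' k, c0 * ∫ x, F k x ∂μ := by
        refine tsum_congr fun k => ?_
        rw [ker, hFdef]
        simp only
        rw [integral_const_mul]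
        ring
    _ = c0 * ∑' k, ∫ x, F k x ∂μ := tsum_mul_left
    _ = c0 * ∫ x, (∑' k, F k x) ∂μ := by rw [hswap]
    _ = c0 * ∫ x, (∏ j, (Complex.exp (Complex.I * t * Real.cos (x j))
          * Complex.exp (-Complex.I * m j * x j))) ∂μ := by simp_rw [hpt]
    _ = c0 * ∏ j, ∫ y in Ioc (0:ℝ) (2*π),
          (Complex.exp (Complex.I * t * Real.cos y) * Complex.exp (-Complex.I * m j * y)) := by
        rw [hμ, box_prod (g := fun j y => Complex.exp (Complex.I * t * Real.cos y)
          * Complex.exp (-Complex.I * m j * y))]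
    _ = c0 * ∏ j, ((2*π:ℝ):ℂ) * (Complex.I ^ (-(m j)) * besselJ (m j) t) := by
        refine congrArg _ (Finset.prod_congr rfl fun j _ => oneD (m j) t)
    _ = ∏ j, Complex.I ^ (-(m j)) * besselJ (m j) t := by
        rw [Finset.prod_mul_distrib, Finset.prod_const, Finset.card_univ, Fintype.card_fin,
          hc0, ← mul_assoc, ← mul_pow]
        rw [show ((((2*π)⁻¹ : ℝ) : ℂ) * ((2*π:ℝ):ℂ)) = 1 by
          rw [← Complex.ofReal_mul, inv_mul_cancel₀ (by positivity), Complex.ofReal_one]]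
        simp

def IsDiscreteLaplacian (d : ℕ)
    (L : lp (fun _ : Fin d → ℤ => ℂ) 2 →L[ℂ] lp (fun _ : Fin d → ℤ => ℂ) 2) : Prop :=
  ∀ (f : lp (fun _ : Fin d → ℤ => ℂ) 2) (n : Fin d → ℤ),
    L f n = (1 / 2) * ∑ j : Fin d, (f (n + Pi.single j 1) + f (n - Pi.single j 1))

noncomputable def evCLM (d : ℕ) (n : Fin d → ℤ) : lp (fun _ : Fin d → ℤ => ℂ) 2 →L[ℂ] ℂ :=
  LinearMap.mkContinuous
    { toFun := fun f => f n
      map_add' := fun f g => by simp [lp.coeFn_add]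
      map_smul' := fun c f => by simp [lp.coeFn_smul] }
    1 (fun f => by
      rw [one_mul]
      exact lp.norm_apply_le_norm (by norm_num) f n)

lemma Lpow {d : ℕ} (L : lp (fun _ : Fin d → ℤ => ℂ) 2 →L[ℂ] lp (fun _ : Fin d → ℤ => ℂ) 2)
    (hL : IsDiscreteLaplacian d L) (n' : Fin d → ℤ) :
    ∀ (k : ℕ) (n : Fin d → ℤ),
      ((L^k) (lp.single 2 n' (1:ℂ))) n = ker d k (fun j => n j - n' j) := by
  intro k
  induction k with
  | zero =>
    intro n
    rw [pow_zero, ContinuousLinearMap.one_apply, ker_zero]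
    by_cases h : n = n'
    · subst h
      rw [lp.single_apply_self, if_pos (show (fun j => n j - n j) = (0 : Fin d → ℤ)
        from funext fun j => sub_self _)]
    · rw [lp.single_apply_ne _ _ _ h, if_neg]
      intro hc
      refine h (funext fun j => ?_)
      have h2 := congrFun hc j
      simpa [sub_eq_zero] using h2
  | succ k ih =>
    intro n
    rw [_root_.pow_succ', ContinuousLinearMap.mul_apply, hL ((L^k) (lp.single 2 n' (1:ℂ))) n]
    have harg1 : ∀ j : Fin d, (fun j' => (n + Pi.single j 1 : Fin d → ℤ) j' - n' j')
        = (fun j' => n j' - n' j') + Pi.single j 1 := by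
      intro j
      funext j'
      show (n j' + (Pi.single j 1 : Fin d → ℤ) j') - n' j'
        = (n j' - n' j') + (Pi.single j 1 : Fin d → ℤ) j'
      ring
    have harg2 : ∀ j : Fin d, (fun j' => (n - Pi.single j 1 : Fin d → ℤ) j' - n' j')
        = (fun j' => n j' - n' j') - Pi.single j 1 := by
      intro j
      funext j'
      show (n j' - (Pi.single j 1 : Fin d → ℤ) j') - n' j'
        = (n j' - n' j') - (Pi.single j 1 : Fin d → ℤ) j'
      ring
    rw [ker_succ]
    congr 1
    refine Finset.sum_congr rfl fun j _ => ?_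
    rw [ih (n + Pi.single j 1), ih (n - Pi.single j 1), harg1 j, harg2 j]

theorem statement5 (d : ℕ) (hd : 1 ≤ d)
    (L : lp (fun _ : Fin d → ℤ => ℂ) 2 →L[ℂ] lp (fun _ : Fin d → ℤ => ℂ) 2)
    (hL : IsDiscreteLaplacian d L) (t : ℝ) (n n' : Fin d → ℤ) :
    (NormedSpace.exp ((Complex.I * t) • L)) (lp.single 2 n' (1:ℂ)) n
      = ∏ j : Fin d, Complex.I ^ (-(n j - n' j)) * besselJ (n j - n' j) t := by
  classical
  set E := lp (fun _ : Fin d → ℤ => ℂ) 2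
  set v : E := lp.single 2 n' (1:ℂ) with hv
  set A : E →L[ℂ] E := (Complex.I * t) • L with hA
  set Φ : (E →L[ℂ] E) →L[ℂ] ℂ :=
    (evCLM d n).comp (ContinuousLinearMap.apply ℂ E v) with hΦ
  have hΦ_apply : ∀ T : E →L[ℂ] E, Φ T = (T v) n := fun T => rfl
  have hsum : Summable (fun k : ℕ => ((k ! : ℕ):ℂ)⁻¹ • A^k) :=
    NormedSpace.expSeries_summable' A
  have h1 : (NormedSpace.exp A v) n = Φ (∑' k : ℕ, ((k ! : ℕ):ℂ)⁻¹ • A^k) := by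
    rw [← hΦ_apply, NormedSpace.exp_eq_tsum ℂ]
  have h2 : Φ (∑' k : ℕ, ((k ! : ℕ):ℂ)⁻¹ • A^k) = ∑' k : ℕ, Φ (((k ! : ℕ):ℂ)⁻¹ • A^k) :=
    Φ.map_tsum hsum
  have h3 : ∀ k : ℕ, Φ (((k ! : ℕ):ℂ)⁻¹ • A^k)
      = ((k ! : ℕ):ℂ)⁻¹ * ((Complex.I * t)^k * ker d k (fun j => n j - n' j)) := by
    intro k
    rw [hΦ_apply, hA, smul_pow, ContinuousLinearMap.smul_apply, ContinuousLinearMap.smul_apply,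
      lp.coeFn_smul, lp.coeFn_smul, Pi.smul_apply, Pi.smul_apply, smul_eq_mul, smul_eq_mul,
      Lpow L hL n' k n]
  rw [h1, h2]
  calc ∑' k : ℕ, Φ (((k ! : ℕ):ℂ)⁻¹ • A^k)
      = ∑' k : ℕ, ((Complex.I * t)^k * ((k ! : ℕ):ℂ)⁻¹) * ker d k (fun j => n j - n' j) := by
        refine tsum_congr fun k => ?_
        rw [h3 k]
        ring
    _ = ∏ j, Complex.I ^ (-((fun j => n j - n' j) j)) * besselJ ((fun j => n j - n' j) j) t :=
        ker_tsum t _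
    _ = ∏ j : Fin d, Complex.I ^ (-(n j - n' j)) * besselJ (n j - n' j) t := rfl
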